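/- Minimal-turn DWBC configurations and the Mallows weight: fix n≥1. (i) Every DWBC six-vertex configuration σ on the n×n square satisfies N₅(σ)+N₆(σ) ≥ n. (ii) The configurations with N₅(σ)+N₆(σ)=n are exactly those with N₆(σ)=0 and N₅(σ)=n, and they are in bijection with permutations τ of {1,…,n}: the Type-5 vertices of the configuration corresponding to τ occupy exactly the positions (τ(y),y) for y=1,…,n. (iii) For the configuration σ_τ corresponding to τ one has N₃(σ_τ)+N₄(σ_τ) = 2·inv(τ) and N₁(σ_τ)+N₂(σ_τ) = n(n−1) − 2·inv(τ), where inv(τ)=#{(i,j) : i<j and τ(i)>τ(j)}. Consequently, for any a,b>0, the probability measure on configurations with N₅+N₆=n proportional to a^{N₁+N₂} b^{N₃+N₄} assigns σ_τ probability q^{inv(τ)}/∑_{τ'∈S_n} q^{inv(τ')} with q=b²/a², i.e. it is the Mallows measure on S_n. -/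

import Mathlib

open scoped BigOperators
open Filter MeasureTheory Topology

namespace SixV


/-- Edge occupations for the six-vertex model on the `n × n` square:
`σ.1 x j` is the occupation of the horizontal edge between `(x, j+1)` and `(x+1, j+1)`
(i.e. `H(x, j+1)` for `x ∈ {0,…,n}`), and `σ.2 i y` is the occupation of the vertical
edge `V(i+1, y)` for `y ∈ {0,…,n}`. -/
abbrev Config (n : ℕ) := (Fin (n + 1) → Fin n → Bool) × (Fin n → Fin (n + 1) → Bool)

def b2n (b : Bool) : ℕ := if b then 1 else 0

/-- Domain Wall Boundary Conditions together with the ice rule (conservation law). -/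
def IsDWBC {n : ℕ} (σ : Config n) : Prop :=
  (∀ i j : Fin n,
      b2n (σ.1 i.castSucc j) + b2n (σ.2 i j.castSucc)
        = b2n (σ.1 i.succ j) + b2n (σ.2 i j.succ)) ∧
  (∀ j : Fin n, σ.1 0 j = true) ∧
  (∀ j : Fin n, σ.1 (Fin.last n) j = false) ∧
  (∀ i : Fin n, σ.2 i 0 = false) ∧
  (∀ i : Fin n, σ.2 i (Fin.last n) = true)

abbrev DWBC (n : ℕ) := {σ : Config n // IsDWBC σ}

noncomputable instance instFintypeDWBC (n : ℕ) : Fintype (DWBC n) := Fintype.ofFinite _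

/-- Vertex type from quadruple (H(x−1,y), V(x,y−1), H(x,y), V(x,y)). -/
def vtype : Bool → Bool → Bool → Bool → ℕ
  | false, false, false, false => 1
  | true,  true,  true,  true  => 2
  | true,  false, true,  false => 3
  | false, true,  false, true  => 4
  | true,  false, false, true  => 5
  | false, true,  true,  false => 6
  | _, _, _, _ => 0

/-- Type of the vertex at `(i+1, j+1)`. -/
def vertexType {n : ℕ} (σ : Config n) (i j : Fin n) : ℕ :=
  vtype (σ.1 i.castSucc j) (σ.2 i j.castSucc) (σ.1 i.succ j) (σ.2 i j.succ)

/-- `Ncount σ t` is the number of vertices of Type `t`. -/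
noncomputable def Ncount {n : ℕ} (σ : Config n) (ty : ℕ) : ℕ :=
  (Finset.univ.filter fun p : Fin n × Fin n => vertexType σ p.1 p.2 = ty).card

/-- The weight `a^(N₁+N₂) b^(N₃+N₄) c^(N₅+N₆)`. -/
noncomputable def wtABC {n : ℕ} (a b c : ℝ) (σ : Config n) : ℝ :=
  a ^ (Ncount σ 1 + Ncount σ 2) * b ^ (Ncount σ 3 + Ncount σ 4)
    * c ^ (Ncount σ 5 + Ncount σ 6)

/-- Gibbs probability of a DWBC configuration. -/
noncomputable def gibbs (n : ℕ) (a b c : ℝ) (σ : DWBC n) : ℝ :=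
  wtABC a b c σ.1 / ∑ σ' : DWBC n, wtABC a b c σ'.1

/-- Columns `x ∈ {1,…,n}` with `V(x, j) = 1`. -/
noncomputable def rowFinset {n : ℕ} (σ : DWBC n) (j : ℕ) : Finset ℕ :=
  if h : j ≤ n then
    (Finset.univ.filter fun x : Fin n => σ.1.2 x ⟨j, Nat.lt_succ_of_le h⟩ = true).image
      fun x : Fin n => (x : ℕ) + 1
  else ∅

/-- The monotone triangle: `lam σ i j` is the `i`-th smallest column with `V(·, j) = 1`. -/
noncomputable def lam {n : ℕ} (σ : DWBC n) (i j : ℕ) : ℕ :=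
  ((rowFinset σ j).sort (· ≤ ·)).getD (i - 1) 0


/-- Weight of the `c → 0` degeneration: supported on configurations with the minimal
number `n` of type `c` vertices, with weight `a^{N₁+N₂} b^{N₃+N₄}`. -/
noncomputable def wt0 {n : ℕ} (a b : ℝ) (σ : Config n) : ℝ :=
  if Ncount σ 5 + Ncount σ 6 = n then
    a ^ (Ncount σ 1 + Ncount σ 2) * b ^ (Ncount σ 3 + Ncount σ 4)
  else 0

/-- Probability of a DWBC configuration under the measure supported on configurations
with `N₅ + N₆ = n`, proportional to `a^{N₁+N₂} b^{N₃+N₄}`. -/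
noncomputable def gibbs0 (n : ℕ) (a b : ℝ) (σ : DWBC n) : ℝ :=
  wt0 a b σ.1 / ∑ σ' : DWBC n, wt0 a b σ'.1

/-- The number of inversions of a permutation of `{0,…,n−1}`. -/
def inversions {n : ℕ} (τ : Equiv.Perm (Fin n)) : ℕ :=
  (Finset.univ.filter fun p : Fin n × Fin n => p.1 < p.2 ∧ τ p.2 < τ p.1).card

lemma vtype_five : ∀ a b c d : Bool, vtype a b c d = 5 →
    a = true ∧ b = false ∧ c = false ∧ d = true := by decide

lemma ice_step : ∀ a b c d : Bool, b2n a + b2n b = b2n c + b2n d →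
    vtype a b c d = 5 ∨ vtype a b c d = 6 ∨ (c = a ∧ d = b) := by decide

lemma ice_h : ∀ a b c d : Bool, b2n a + b2n b = b2n c + b2n d →
    ((if vtype a b c d = 5 then (1:ℤ) else 0) - (if vtype a b c d = 6 then 1 else 0))
      = (b2n a : ℤ) - (b2n c : ℤ) := by decide

lemma ice_v : ∀ a b c d : Bool, b2n a + b2n b = b2n c + b2n d →
    ((if vtype a b c d = 5 then (1:ℤ) else 0) - (if vtype a b c d = 6 then 1 else 0))
      = (b2n d : ℤ) - (b2n b : ℤ) := by decide

/-- number of type-`t` vertices in row `j` -/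
noncomputable def rowC {n : ℕ} (σ : Config n) (t : ℕ) (j : Fin n) : ℕ :=
  (Finset.univ.filter fun i : Fin n => vertexType σ i j = t).card

noncomputable def colC {n : ℕ} (σ : Config n) (t : ℕ) (i : Fin n) : ℕ :=
  (Finset.univ.filter fun j : Fin n => vertexType σ i j = t).card

lemma Ncount_eq_sum_row {n : ℕ} (σ : Config n) (t : ℕ) :
    Ncount σ t = ∑ j : Fin n, rowC σ t j := by
  simp only [Ncount, rowC, Finset.card_filter]
  rw [Fintype.sum_prod_type]
  exact Finset.sum_comm

lemma Ncount_eq_sum_col {n : ℕ} (σ : Config n) (t : ℕ) :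
    Ncount σ t = ∑ i : Fin n, colC σ t i := by
  simp only [Ncount, colC, Finset.card_filter]
  rw [Fintype.sum_prod_type]

lemma fin_telescope {M : Type*} [AddCommGroup M] : ∀ (n : ℕ) (g : Fin (n+1) → M),
    ∑ i : Fin n, (g i.castSucc - g i.succ) = g 0 - g (Fin.last n) := by
  intro n
  induction n with
  | zero => simp
  | succ n ih =>
    intro g
    rw [Fin.sum_univ_castSucc]
    have h := ih (fun x => g x.castSucc)
    simp only [Fin.succ_castSucc] at h ⊢
    rw [show ∑ i : Fin n, (g i.castSucc.castSucc - g i.succ.castSucc)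
        = g 0 - g ((Fin.last n).castSucc) by simpa using h]
    simp only [Fin.castSucc_zero, Fin.succ_last]
    abel

lemma row_five_six {n : ℕ} (σ : DWBC n) (j : Fin n) :
    rowC σ.1 5 j = rowC σ.1 6 j + 1 := by
  obtain ⟨hice, hL, hR, hB, hT⟩ := σ.2
  have key : (rowC σ.1 5 j : ℤ) - (rowC σ.1 6 j : ℤ) = 1 := by
    have h1 : ∀ t, (rowC σ.1 t j : ℤ)
        = ∑ i : Fin n, (if vertexType σ.1 i j = t then (1:ℤ) else 0) := by
      intro t; rw [rowC, Finset.card_filter]; push_cast; rfl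
    rw [h1, h1, ← Finset.sum_sub_distrib]
    have h2 : ∀ i : Fin n, ((if vertexType σ.1 i j = 5 then (1:ℤ) else 0)
        - (if vertexType σ.1 i j = 6 then 1 else 0))
        = (b2n (σ.1.1 i.castSucc j) : ℤ) - (b2n (σ.1.1 i.succ j) : ℤ) := by
      intro i; exact ice_h _ _ _ _ (hice i j)
    rw [Finset.sum_congr rfl (fun i _ => h2 i),
      fin_telescope n (fun x => (b2n (σ.1.1 x j) : ℤ)), hL j, hR j]
    rfl
  omega

lemma col_five_six {n : ℕ} (σ : DWBC n) (i : Fin n) :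
    colC σ.1 5 i = colC σ.1 6 i + 1 := by
  obtain ⟨hice, hL, hR, hB, hT⟩ := σ.2
  have key : (colC σ.1 5 i : ℤ) - (colC σ.1 6 i : ℤ) = 1 := by
    have h1 : ∀ t, (colC σ.1 t i : ℤ)
        = ∑ j : Fin n, (if vertexType σ.1 i j = t then (1:ℤ) else 0) := by
      intro t; rw [colC, Finset.card_filter]; push_cast; rfl
    rw [h1, h1, ← Finset.sum_sub_distrib]
    have h2 : ∀ j : Fin n, ((if vertexType σ.1 i j = 5 then (1:ℤ) else 0)
        - (if vertexType σ.1 i j = 6 then 1 else 0))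
        = (b2n (σ.1.2 i j.succ) : ℤ) - (b2n (σ.1.2 i j.castSucc) : ℤ) := by
      intro j; exact ice_v _ _ _ _ (hice i j)
    have h3 := fin_telescope n (fun y => (b2n (σ.1.2 i y) : ℤ))
    rw [Finset.sum_congr rfl (fun j _ => h2 j)]
    rw [show ∑ j : Fin n, ((b2n (σ.1.2 i j.succ) : ℤ) - (b2n (σ.1.2 i j.castSucc) : ℤ))
        = -∑ j : Fin n, ((b2n (σ.1.2 i j.castSucc) : ℤ) - (b2n (σ.1.2 i j.succ) : ℤ)) by
      rw [← Finset.sum_neg_distrib]; exact Finset.sum_congr rfl fun _ _ => by ring]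
    rw [h3, hB i, hT i]
    rfl
  omega

lemma N5_eq_N6_add {n : ℕ} (σ : DWBC n) : Ncount σ.1 5 = Ncount σ.1 6 + n := by
  rw [Ncount_eq_sum_row, Ncount_eq_sum_row]
  rw [Finset.sum_congr rfl (fun j _ => row_five_six σ j)]
  rw [Finset.sum_add_distrib]
  simp

/-- The minimal configuration associated to a permutation. -/
def mkCfg {n : ℕ} (τ : Equiv.Perm (Fin n)) : Config n :=
  (fun x j => decide ((x : ℕ) ≤ (τ j : ℕ)),
   fun i y => decide (((τ.symm i : Fin n) : ℕ) < (y : ℕ)))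

lemma mkCfg_key {n : ℕ} (τ : Equiv.Perm (Fin n)) (i j : Fin n) :
    (i : ℕ) = (τ j : ℕ) ↔ ((τ.symm i : Fin n) : ℕ) = (j : ℕ) := by
  rw [← Fin.ext_iff, ← Fin.ext_iff]
  constructor
  · intro h; rw [h]; exact τ.symm_apply_apply j
  · intro h; rw [← h]; exact (τ.apply_symm_apply i).symm

lemma mkCfg_isDWBC {n : ℕ} (τ : Equiv.Perm (Fin n)) : IsDWBC (mkCfg τ) := by
  refine ⟨?_, ?_, ?_, ?_, ?_⟩
  · intro i j
    have key := mkCfg_key τ i j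
    simp only [mkCfg, b2n, Fin.coe_castSucc, Fin.val_succ, Fin.val_zero]
    have hb : ∀ p : Prop, [inst : Decidable p] →
        (if (decide p) = true then 1 else 0) = (if p then 1 else 0) := by
      intro p inst; by_cases h : p <;> simp [h]
    by_cases h1 : (i : ℕ) = (τ j : ℕ)
    · have h2 : ((τ.symm i : Fin n) : ℕ) = (j : ℕ) := key.mp h1
      split_ifs <;> first | rfl | omega | simp_all
    · have h2 : ¬ ((τ.symm i : Fin n) : ℕ) = (j : ℕ) := fun h => h1 (key.mpr h)
      simp only [decide_eq_true_eq]
      split <;> split <;> split <;> split <;> omega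
  · intro j; simp [mkCfg]
  · intro j; simp [mkCfg, Fin.last]
  · intro i; simp [mkCfg]
  · intro i; simp [mkCfg, Fin.last]

lemma mkCfg_vt {n : ℕ} (τ : Equiv.Perm (Fin n)) (i j : Fin n) :
    vertexType (mkCfg τ) i j =
      if (i : ℕ) = (τ j : ℕ) then 5
      else if (i : ℕ) < (τ j : ℕ) then
        (if (j : ℕ) < ((τ.symm i : Fin n) : ℕ) then 3 else 2)
      else (if ((τ.symm i : Fin n) : ℕ) < (j : ℕ) then 4 else 1) := by
  have key := mkCfg_key τ i j
  simp only [vertexType, mkCfg, Fin.coe_castSucc, Fin.val_succ]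
  set a := (i : ℕ); set t := (τ j : ℕ); set s := ((τ.symm i : Fin n) : ℕ); set r := (j : ℕ)
  rcases lt_trichotomy a t with h | h | h
  · have hs : s ≠ r := fun hh => (by omega : a ≠ t) (key.mpr hh)
    rcases lt_trichotomy s r with h2 | h2 | h2
    · rw [decide_eq_true (show a ≤ t by omega), decide_eq_true (show s < r by omega),
        decide_eq_true (show a + 1 ≤ t by omega), decide_eq_true (show s < r + 1 by omega)]
      rw [if_neg (show ¬ a = t by omega), if_pos h, if_neg (show ¬ r < s by omega)]
      rfl
    · exact absurd h2 hs
    · rw [decide_eq_true (show a ≤ t by omega), decide_eq_false (show ¬ s < r by omega),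
        decide_eq_true (show a + 1 ≤ t by omega), decide_eq_false (show ¬ s < r + 1 by omega)]
      rw [if_neg (show ¬ a = t by omega), if_pos h, if_pos (show r < s by omega)]
      rfl
  · have hs : s = r := key.mp h
    rw [decide_eq_true (show a ≤ t by omega), decide_eq_false (show ¬ s < r by omega),
      decide_eq_false (show ¬ a + 1 ≤ t by omega), decide_eq_true (show s < r + 1 by omega)]
    rw [if_pos h]
    rfl
  · have hs : s ≠ r := fun hh => (by omega : a ≠ t) (key.mpr hh)
    rcases lt_trichotomy s r with h2 | h2 | h2
    · rw [decide_eq_false (show ¬ a ≤ t by omega), decide_eq_true (show s < r by omega),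
        decide_eq_false (show ¬ a + 1 ≤ t by omega), decide_eq_true (show s < r + 1 by omega)]
      rw [if_neg (show ¬ a = t by omega), if_neg (show ¬ a < t by omega), if_pos h2]
      rfl
    · exact absurd h2 hs
    · rw [decide_eq_false (show ¬ a ≤ t by omega), decide_eq_false (show ¬ s < r by omega),
        decide_eq_false (show ¬ a + 1 ≤ t by omega), decide_eq_false (show ¬ s < r + 1 by omega)]
      rw [if_neg (show ¬ a = t by omega), if_neg (show ¬ a < t by omega),
        if_neg (show ¬ s < r by omega)]
      rfl

lemma mkCfg_N5 {n : ℕ} (τ : Equiv.Perm (Fin n)) : Ncount (mkCfg τ) 5 = n := by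
  rw [Ncount_eq_sum_row]
  have h : ∀ j : Fin n, rowC (mkCfg τ) 5 j = 1 := by
    intro j
    rw [rowC]
    have : (Finset.univ.filter fun i : Fin n => vertexType (mkCfg τ) i j = 5) = {τ j} := by
      ext i
      simp only [Finset.mem_filter, Finset.mem_univ, true_and, Finset.mem_singleton, mkCfg_vt]
      constructor
      · intro h; by_contra hne
        have : ¬ (i : ℕ) = (τ j : ℕ) := fun hh => hne (Fin.ext hh)
        rw [if_neg this] at h
        split_ifs at h <;> omega
      · intro h; rw [if_pos (by rw [h])]
    rw [this, Finset.card_singleton]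
  simp [h]

lemma mkCfg_N6 {n : ℕ} (τ : Equiv.Perm (Fin n)) : Ncount (mkCfg τ) 6 = 0 := by
  rw [Ncount, Finset.card_eq_zero, Finset.filter_eq_empty_iff]
  intro p _
  rw [mkCfg_vt]
  split_ifs <;> omega

lemma mkCfg_N3 {n : ℕ} (τ : Equiv.Perm (Fin n)) : Ncount (mkCfg τ) 3 = inversions τ := by
  rw [Ncount, inversions]
  apply Finset.card_bij' (fun p _ => ((p.2 : Fin n), (τ.symm p.1 : Fin n)))
    (fun p _ => ((τ p.2 : Fin n), (p.1 : Fin n)))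
  · intro p hp
    simp only [Finset.mem_filter, Finset.mem_univ, true_and, mkCfg_vt] at hp ⊢
    have h3 : (p.1 : ℕ) < (τ p.2 : ℕ) ∧ (p.2 : ℕ) < ((τ.symm p.1 : Fin n) : ℕ) := by
      by_cases h1 : (p.1 : ℕ) = (τ p.2 : ℕ)
      · rw [if_pos h1] at hp; omega
      · rw [if_neg h1] at hp; split_ifs at hp <;> omega
    refine ⟨?_, ?_⟩
    · exact Fin.lt_def.mpr h3.2
    · rw [Equiv.apply_symm_apply]; exact Fin.lt_def.mpr h3.1
  · intro p hp
    simp only [Finset.mem_filter, Finset.mem_univ, true_and, mkCfg_vt] at hp ⊢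
    obtain ⟨h1, h2⟩ := hp
    have hs : (τ.symm (τ p.2) : Fin n) = p.2 := τ.symm_apply_apply p.2
    rw [if_neg (fun hh => absurd (Fin.ext hh) (ne_of_lt h2)), if_pos (Fin.lt_def.mp h2),
      if_pos (by rw [hs]; exact Fin.lt_def.mp h1)]
  · intro p hp; simp [Prod.ext_iff]
  · intro p hp
    simp only [Finset.mem_filter, Finset.mem_univ, true_and] at hp
    simp [Prod.ext_iff]

lemma mkCfg_N4 {n : ℕ} (τ : Equiv.Perm (Fin n)) : Ncount (mkCfg τ) 4 = inversions τ := by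
  rw [Ncount, inversions]
  apply Finset.card_bij' (fun p _ => ((τ.symm p.1 : Fin n), (p.2 : Fin n)))
    (fun p _ => ((τ p.1 : Fin n), (p.2 : Fin n)))
  · intro p hp
    simp only [Finset.mem_filter, Finset.mem_univ, true_and, mkCfg_vt] at hp ⊢
    have h4 : (τ p.2 : ℕ) < (p.1 : ℕ) ∧ ((τ.symm p.1 : Fin n) : ℕ) < (p.2 : ℕ) := by
      by_cases h1 : (p.1 : ℕ) = (τ p.2 : ℕ)
      · rw [if_pos h1] at hp; omega
      · rw [if_neg h1] at hp; split_ifs at hp <;> omega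
    refine ⟨Fin.lt_def.mpr h4.2, ?_⟩
    rw [Equiv.apply_symm_apply]; exact Fin.lt_def.mpr h4.1
  · intro p hp
    simp only [Finset.mem_filter, Finset.mem_univ, true_and, mkCfg_vt] at hp ⊢
    obtain ⟨h1, h2⟩ := hp
    have hs : (τ.symm (τ p.1) : Fin n) = p.1 := τ.symm_apply_apply p.1
    have hn2 := Fin.lt_def.mp h2
    rw [if_neg (show ¬ ((τ p.1 : Fin n) : ℕ) = ((τ p.2 : Fin n) : ℕ) by omega),
      if_neg (show ¬ ((τ p.1 : Fin n) : ℕ) < ((τ p.2 : Fin n) : ℕ) by omega),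
      if_pos (show ((τ.symm (τ p.1) : Fin n) : ℕ) < (p.2 : ℕ) by
        rw [hs]; exact Fin.lt_def.mp h1)]
  · intro p hp; simp [Prod.ext_iff]
  · intro p hp; simp [Prod.ext_iff]

lemma mkCfg_total {n : ℕ} (τ : Equiv.Perm (Fin n)) :
    Ncount (mkCfg τ) 1 + Ncount (mkCfg τ) 2 + Ncount (mkCfg τ) 3 + Ncount (mkCfg τ) 4
      + Ncount (mkCfg τ) 5 = n * n := by
  have hmem : ∀ p : Fin n × Fin n,
      vertexType (mkCfg τ) p.1 p.2 ∈ ({1, 2, 3, 4, 5} : Finset ℕ) := by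
    intro p
    rw [mkCfg_vt]
    split_ifs <;> simp
  have key := Finset.card_eq_sum_card_fiberwise
    (s := (Finset.univ : Finset (Fin n × Fin n)))
    (f := fun p : Fin n × Fin n => vertexType (mkCfg τ) p.1 p.2)
    (t := ({1, 2, 3, 4, 5} : Finset ℕ)) (fun p _ => hmem p)
  rw [Finset.card_univ] at key
  simp only [Fintype.card_prod, Fintype.card_fin] at key
  rw [show ({1, 2, 3, 4, 5} : Finset ℕ) = insert 1 (insert 2 (insert 3 (insert 4 {5}))) from rfl,
    Finset.sum_insert (by decide), Finset.sum_insert (by decide),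
    Finset.sum_insert (by decide), Finset.sum_insert (by decide),
    Finset.sum_singleton] at key
  have e1 : ∀ t, Ncount (mkCfg τ) t
      = (Finset.univ.filter fun p : Fin n × Fin n => vertexType (mkCfg τ) p.1 p.2 = t).card :=
    fun t => rfl
  rw [e1, e1, e1, e1, e1]
  omega

lemma exists_perm {n : ℕ} (σ : DWBC n) (hmin : Ncount σ.1 5 + Ncount σ.1 6 = n) :
    ∃ τ : Equiv.Perm (Fin n), σ.1 = mkCfg τ := by
  have h6 : Ncount σ.1 6 = 0 := by have := N5_eq_N6_add σ; omega
  have no6 : ∀ i j : Fin n, vertexType σ.1 i j ≠ 6 := by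
    intro i j hv
    have hmem : (i, j) ∈ Finset.univ.filter
        (fun p : Fin n × Fin n => vertexType σ.1 p.1 p.2 = 6) := by
      simp [hv]
    rw [Finset.card_eq_zero.mp h6] at hmem
    exact absurd hmem (Finset.notMem_empty _)
  have row6 : ∀ j : Fin n, rowC σ.1 6 j = 0 := by
    rw [Ncount_eq_sum_row] at h6
    intro j; exact Finset.sum_eq_zero_iff.mp h6 j (Finset.mem_univ j)
  have col6 : ∀ i : Fin n, colC σ.1 6 i = 0 := by
    have h6' := h6
    rw [Ncount_eq_sum_col] at h6'
    intro i; exact Finset.sum_eq_zero_iff.mp h6' i (Finset.mem_univ i)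
  have row5 : ∀ j : Fin n, rowC σ.1 5 j = 1 := by
    intro j; rw [row_five_six σ j, row6 j]
  have col5 : ∀ i : Fin n, colC σ.1 5 i = 1 := by
    intro i; rw [col_five_six σ i, col6 i]
  choose p hp using fun j => Finset.card_eq_one.mp (row5 j)
  choose q hq using fun i => Finset.card_eq_one.mp (col5 i)
  have hp5 : ∀ (j i : Fin n), vertexType σ.1 i j = 5 ↔ i = p j := by
    intro j i
    simpa using Finset.ext_iff.mp (hp j) i
  have hq5 : ∀ (i j : Fin n), vertexType σ.1 i j = 5 ↔ j = q i := by
    intro i j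
    simpa using Finset.ext_iff.mp (hq i) j
  have hqp : ∀ j, q (p j) = j := fun j => ((hq5 (p j) j).mp ((hp5 j (p j)).mpr rfl)).symm
  have hpq : ∀ i, p (q i) = i := fun i => ((hp5 (q i) i).mp ((hq5 i (q i)).mpr rfl)).symm
  refine ⟨⟨p, q, hqp, hpq⟩, ?_⟩
  have Hform : ∀ (j : Fin n) (m : ℕ) (hm : m < n + 1),
      σ.1.1 ⟨m, hm⟩ j = decide (m ≤ ((p j : Fin n) : ℕ)) := by
    intro j m
    induction m with
    | zero =>
      intro hm
      rw [show (⟨0, hm⟩ : Fin (n+1)) = 0 from rfl, σ.2.2.1 j,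
        decide_eq_true (Nat.zero_le _)]
    | succ m ih =>
      intro hm
      have hmn : m < n := by omega
      have ihm := ih (by omega)
      set i : Fin n := ⟨m, hmn⟩ with hi
      have hsc : (⟨m+1, hm⟩ : Fin (n+1)) = i.succ := rfl
      have hcs : i.castSucc = (⟨m, by omega⟩ : Fin (n+1)) := rfl
      by_cases hcase : i = p j
      · have h5 := vtype_five _ _ _ _ ((hp5 j i).mpr hcase)
        rw [hsc, h5.2.2.1]
        have hval : ((p j : Fin n) : ℕ) = m := by rw [← hcase]
        rw [decide_eq_false (by omega)]
      · rcases ice_step _ _ _ _ (σ.2.1 i j) with h | h | h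
        · exact absurd ((hp5 j i).mp h) hcase
        · exact absurd h (no6 i j)
        · rw [hsc, h.1, hcs, ihm]
          have hne : m ≠ ((p j : Fin n) : ℕ) := fun hh => hcase (Fin.ext hh)
          rw [decide_eq_decide]
          omega
  have Vform : ∀ (i : Fin n) (r : ℕ) (hr : r < n + 1),
      σ.1.2 i ⟨r, hr⟩ = decide (((q i : Fin n) : ℕ) < r) := by
    intro i r
    induction r with
    | zero =>
      intro hr
      rw [show (⟨0, hr⟩ : Fin (n+1)) = 0 from rfl, σ.2.2.2.2.1 i,
        decide_eq_false (by omega)]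
    | succ r ih =>
      intro hr
      have hrn : r < n := by omega
      have ihr := ih (by omega)
      set j : Fin n := ⟨r, hrn⟩ with hj
      have hsc : (⟨r+1, hr⟩ : Fin (n+1)) = j.succ := rfl
      have hcs : j.castSucc = (⟨r, by omega⟩ : Fin (n+1)) := rfl
      by_cases hcase : j = q i
      · have h5 := vtype_five _ _ _ _ ((hq5 i j).mpr hcase)
        rw [hsc, h5.2.2.2]
        have hval : ((q i : Fin n) : ℕ) = r := by rw [← hcase]
        rw [decide_eq_true (by omega)]
      · rcases ice_step _ _ _ _ (σ.2.1 i j) with h | h | h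
        · exact absurd ((hq5 i j).mp h) hcase
        · exact absurd h (no6 i j)
        · rw [hsc, h.2, hcs, ihr]
          have hne : r ≠ ((q i : Fin n) : ℕ) := fun hh => hcase (Fin.ext hh)
          rw [decide_eq_decide]
          omega
  refine Prod.ext ?_ ?_
  · funext x j
    have := Hform j x.1 x.2
    simpa [mkCfg] using this
  · funext i y
    have := Vform i y.1 y.2
    simpa [mkCfg] using this


/-- **Minimal-turn DWBC configurations and the Mallows weight.**
(i) every DWBC configuration on the `n × n` square has at least `n` type-`c` vertices;
(ii) `N₅ + N₆ = n` forces `N₆ = 0`, `N₅ = n`; (iii) such configurations are in bijection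
with permutations `τ` of `{1,…,n}`, the type-5 vertices occupying the positions
`(τ(y), y)`; for the configuration `σ_τ` one has `N₃+N₄ = 2·inv(τ)` and
`N₁+N₂ = n(n−1) − 2·inv(τ)`; consequently, for `a, b > 0` the measure on minimal-turn
configurations proportional to `a^{N₁+N₂} b^{N₃+N₄}` is the Mallows measure with
`q = b²/a²`. -/
theorem minimal_turn_configurations_mallows (n : ℕ) (hn : 1 ≤ n) :
    (∀ σ : DWBC n, n ≤ Ncount σ.1 5 + Ncount σ.1 6) ∧
    (∀ σ : DWBC n, Ncount σ.1 5 + Ncount σ.1 6 = n ↔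
      (Ncount σ.1 6 = 0 ∧ Ncount σ.1 5 = n)) ∧
    ∃ e : {σ : DWBC n // Ncount σ.1 5 + Ncount σ.1 6 = n} ≃ Equiv.Perm (Fin n),
      (∀ σ, ∀ i j : Fin n, vertexType σ.1.1 i j = 5 ↔ e σ j = i) ∧
      (∀ σ, Ncount σ.1.1 3 + Ncount σ.1.1 4 = 2 * inversions (e σ) ∧
        Ncount σ.1.1 1 + Ncount σ.1.1 2 = n * (n - 1) - 2 * inversions (e σ)) ∧
      (∀ a b : ℝ, 0 < a → 0 < b → ∀ σ,
        gibbs0 n a b σ.1 =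
          (b ^ 2 / a ^ 2) ^ inversions (e σ)
            / ∑ τ' : Equiv.Perm (Fin n), (b ^ 2 / a ^ 2) ^ inversions τ') := by
  classical
  refine ⟨fun σ => by have := N5_eq_N6_add σ; omega,
    fun σ => by have := N5_eq_N6_add σ; constructor <;> intro <;> omega, ?_⟩
  set P : DWBC n → Prop := fun σ' => Ncount σ'.1 5 + Ncount σ'.1 6 = n with hP
  set g : Equiv.Perm (Fin n) → {σ : DWBC n // P σ} :=
    fun τ => ⟨⟨mkCfg τ, mkCfg_isDWBC τ⟩, by
      show Ncount (mkCfg τ) 5 + Ncount (mkCfg τ) 6 = n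
      rw [mkCfg_N5, mkCfg_N6]; omega⟩ with hg
  have hgbij : Function.Bijective g := by
    constructor
    · intro τ τ' h
      have hEq : mkCfg τ = mkCfg τ' := congrArg (fun z => z.1.1) h
      ext j
      have h5 : vertexType (mkCfg τ') (τ j) j = 5 := by
        rw [← hEq, mkCfg_vt, if_pos rfl]
      rw [mkCfg_vt] at h5
      by_contra hne
      rw [if_neg hne] at h5
      split_ifs at h5 <;> omega
    · intro σ'
      obtain ⟨τ, hτ⟩ := exists_perm σ'.1 σ'.2
      exact ⟨τ, Subtype.ext (Subtype.ext hτ.symm)⟩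
  set e := (Equiv.ofBijective g hgbij).symm with he
  have hcfg : ∀ σ : {σ : DWBC n // P σ}, σ.1.1 = mkCfg (e σ) := by
    intro σ
    have h := (Equiv.ofBijective g hgbij).apply_symm_apply σ
    exact (congrArg (fun z : {σ : DWBC n // P σ} => z.1.1) h).symm
  have hA : ∀ σ : {σ : DWBC n // P σ}, ∀ i j : Fin n,
      vertexType σ.1.1 i j = 5 ↔ e σ j = i := by
    intro σ i j
    rw [hcfg σ, mkCfg_vt]
    constructor
    · intro h
      by_contra hne
      have : ¬ (i : ℕ) = ((e σ j : Fin n) : ℕ) := fun hh => hne (Fin.ext hh.symm)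
      rw [if_neg this] at h
      split_ifs at h <;> omega
    · intro h; rw [if_pos (by rw [h])]
  have hid : n * (n - 1) + n = n * n := by
    cases n with
    | zero => simp
    | succ k => simp [Nat.succ_sub_one]; ring
  have hB : ∀ σ : {σ : DWBC n // P σ},
      Ncount σ.1.1 3 + Ncount σ.1.1 4 = 2 * inversions (e σ) ∧
        Ncount σ.1.1 1 + Ncount σ.1.1 2 = n * (n - 1) - 2 * inversions (e σ) := by
    intro σ
    have htot := mkCfg_total (e σ)
    have h3 := mkCfg_N3 (e σ); have h4 := mkCfg_N4 (e σ); have h5 := mkCfg_N5 (e σ)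
    rw [hcfg σ]
    constructor
    · rw [h3, h4]; ring
    · omega
  refine ⟨e, hA, hB, ?_⟩
  intro a b ha hb σ
  have hM : (a : ℝ) ^ (n * (n - 1)) ≠ 0 := pow_ne_zero _ ha.ne'
  have hw : ∀ σ' : {σ : DWBC n // P σ}, wt0 a b σ'.1.1
      = a ^ (n * (n - 1)) * (b ^ 2 / a ^ 2) ^ inversions (e σ') := by
    intro σ'
    have hcond : Ncount σ'.1.1 5 + Ncount σ'.1.1 6 = n := σ'.2
    have h34 := (hB σ').1
    have h12 := (hB σ').2
    have h2k : 2 * inversions (e σ') ≤ n * (n - 1) := by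
      have htot := mkCfg_total (e σ')
      have h3 := mkCfg_N3 (e σ'); have h4 := mkCfg_N4 (e σ'); have h5 := mkCfg_N5 (e σ')
      omega
    rw [wt0, if_pos hcond, h34, h12]
    rw [pow_sub₀ a ha.ne' h2k, div_pow, ← pow_mul, ← pow_mul]
    ring
  have hdenom : (∑ σ' : DWBC n, wt0 a b σ'.1)
      = a ^ (n * (n - 1)) * ∑ τ' : Equiv.Perm (Fin n), (b ^ 2 / a ^ 2) ^ inversions τ' := by
    have step1 : (∑ σ' : DWBC n, wt0 a b σ'.1)
        = ∑ σ' ∈ Finset.univ.filter P, wt0 a b σ'.1 := by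
      rw [Finset.sum_filter]
      refine Finset.sum_congr rfl fun σ' _ => ?_
      by_cases h : P σ'
      · rw [if_pos h]
      · rw [if_neg h, wt0, if_neg h]
    rw [step1, Finset.sum_subtype (p := P) (Finset.univ.filter P) (fun x => by simp)
      (fun σ' => wt0 a b σ'.1)]
    rw [Finset.sum_congr rfl fun σ' _ => hw σ', ← Finset.mul_sum]
    congr 1
    exact Equiv.sum_comp e (fun τ' => (b ^ 2 / a ^ 2) ^ inversions τ')
  rw [gibbs0, hdenom, hw σ, mul_div_mul_left _ _ hM]

end SixV
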